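/- Let k ≥ 1 be an integer and let c : ℤ → ℤ be the coefficient function of the symmetrized Alexander polynomial of the pretzel knot P(-2,3,4k+3), and for j ≥ 0 define the torsion coefficient t(j) = Σ_{n ≥ 1} n · c(j+n). Then t(j) = k + 1 − ⌊j/2⌋ for 0 ≤ j ≤ 2k+1, t(2k+2) = 1, and t(j) = 0 for all j ≥ 2k+3. -/

import Mathlib

private lemma altsum_pretzel (N : ℕ) :
    (2:ℤ) * ∑ i ∈ Finset.range N, ((i:ℤ)+1) * (-1:ℤ)^(i+1) =
      if Even N then (N:ℤ) else -((N:ℤ)+1) := by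
  induction N with
  | zero => simp
  | succ m ih =>
    rw [Finset.sum_range_succ, mul_add, ih]
    rcases Nat.even_or_odd m with h | h
    · rw [if_pos h, if_neg (by simp [Nat.even_add_one, h])]
      have hp : (-1:ℤ)^(m+1) = -1 := Odd.neg_one_pow (Even.add_one h)
      rw [hp]; push_cast; ring
    · rw [if_neg (by simpa using h), if_pos (by simpa [Nat.even_add_one] using h)]
      have hp : (-1:ℤ)^(m+1) = 1 := Even.neg_one_pow (Odd.add_one h)
      rw [hp]; push_cast; ring

/- For the pretzel knot P(-2,3,4k+3), k ≥ 1, with coefficient function c of its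
symmetrized Alexander polynomial, the torsion coefficients
t(j) = Σ_{n ≥ 1} n·c(j+n) satisfy t(j) = k + 1 − ⌊j/2⌋ for 0 ≤ j ≤ 2k+1,
t(2k+2) = 1, and t(j) = 0 for j ≥ 2k+3. -/
theorem pretzel_4k3_torsion_coefficients (k : ℕ) (hk : 1 ≤ k) (c : ℤ → ℤ)
    (hc : ∀ i : ℤ, c i =
      if i = 0 then 1
      else if i.natAbs ≤ 2 * k then (-1 : ℤ) ^ i.natAbs
      else if i.natAbs = 2 * k + 2 then -1
      else if i.natAbs = 2 * k + 3 then 1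
      else 0)
    (t : ℤ → ℤ)
    (ht : ∀ j : ℤ, t j = ∑ᶠ n ∈ {n : ℤ | 1 ≤ n}, n * c (j + n)) :
    ∀ j : ℤ, 0 ≤ j →
      ((j ≤ 2 * k + 1 → t j = k + 1 - ⌊(j : ℚ) / 2⌋) ∧
       (j = 2 * k + 2 → t j = 1) ∧
       (2 * k + 3 ≤ j → t j = 0)) := by
  -- values of c at natural number points
  have hc0 : ∀ m : ℕ, 1 ≤ m → m ≤ 2*k → c (m:ℤ) = (-1:ℤ)^m := by
    intro m h1 h2
    rw [hc]
    simp only [Int.natAbs_natCast, Nat.cast_eq_zero]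
    split_ifs <;> first | rfl | omega | (exfalso; first | omega | assumption)
  have hc1 : c ((2*k+1 : ℕ):ℤ) = 0 := by
    rw [hc]
    simp only [Int.natAbs_natCast, Nat.cast_eq_zero]
    split_ifs <;> first | rfl | omega | (exfalso; first | omega | assumption)
  have hc2 : c ((2*k+2 : ℕ):ℤ) = -1 := by
    rw [hc]
    simp only [Int.natAbs_natCast, Nat.cast_eq_zero]
    split_ifs <;> first | rfl | omega | (exfalso; first | omega | assumption)
  have hc3 : c ((2*k+3 : ℕ):ℤ) = 1 := by
    rw [hc]
    simp only [Int.natAbs_natCast, Nat.cast_eq_zero]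
    split_ifs <;> first | rfl | omega | (exfalso; first | omega | assumption)
  -- reduce the finsum to a finite range sum
  have key : ∀ m : ℕ, t (m:ℤ) =
      ∑ i ∈ Finset.range (2*k+3-m), ((i:ℤ)+1) * c ((m:ℤ) + ((i:ℤ)+1)) := by
    intro m
    rw [ht]
    rw [finsum_mem_eq_sum_of_subset _
      (t := (Finset.range (2*k+3-m)).map
        (⟨fun i => (i:ℤ)+1, fun a b h => by simpa using h⟩ : ℕ ↪ ℤ))
      ?h1 ?h2]
    · rw [Finset.sum_map]; rfl
    case h1 =>
      intro n hn
      obtain ⟨h1n, hsupp⟩ := hn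
      simp only [Set.mem_setOf_eq] at h1n
      rw [Function.mem_support] at hsupp
      have hcne : c ((m:ℤ) + n) ≠ 0 := by
        intro h0; apply hsupp; rw [h0, mul_zero]
      have hle : (m:ℤ) + n ≤ 2*k+3 := by
        rw [hc] at hcne
        split_ifs at hcne with h1 h2 h3 h4
        · omega
        · omega
        · omega
        · omega
        · exact absurd rfl hcne
      simp only [Finset.coe_map, Set.mem_image, Finset.mem_coe, Finset.mem_range,
        Function.Embedding.coeFn_mk]
      exact ⟨(n-1).toNat, by omega, by show (((n-1).toNat : ℕ) : ℤ) + 1 = n; omega⟩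
    case h2 =>
      intro n hn
      simp only [Finset.coe_map, Set.mem_image, Finset.mem_coe, Finset.mem_range,
        Function.Embedding.coeFn_mk] at hn
      obtain ⟨i, _, rfl⟩ := hn
      simp only [Set.mem_setOf_eq]
      show 1 ≤ (i:ℤ) + 1
      omega
  intro j hj
  lift j to ℕ using hj with jn
  refine ⟨?_, ?_, ?_⟩
  · -- case 0 ≤ j ≤ 2k+1
    intro hle
    have hfloor : ⌊(((jn:ℤ)):ℚ)/2⌋ = (jn:ℤ)/2 := by
      rw [show (2:ℚ) = ((2:ℕ):ℚ) by norm_num]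
      exact Rat.floor_intCast_div_natCast _ _
    rw [hfloor]
    by_cases hcase : jn = 2*k+1
    · subst hcase
      have hv : t ((2*k+1 : ℕ):ℤ) = 1 := by
        rw [key (2*k+1), show 2*k+3-(2*k+1) = 2 from by omega,
          Finset.sum_range_succ, Finset.sum_range_one]
        rw [show ((2*k+1:ℕ):ℤ) + (((0:ℕ):ℤ)+1) = ((2*k+2:ℕ):ℤ) by push_cast; ring]
        rw [show ((2*k+1:ℕ):ℤ) + (((1:ℕ):ℤ)+1) = ((2*k+3:ℕ):ℤ) by push_cast; ring]
        rw [hc2, hc3]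
        norm_num
      omega
    · have hjk : jn ≤ 2*k := by omega
      set N := 2*k - jn with hN
      rw [key jn, show 2*k+3-jn = N+3 from by omega,
        Finset.sum_range_succ, Finset.sum_range_succ, Finset.sum_range_succ]
      rw [show ((jn:ℕ):ℤ) + (((N:ℕ):ℤ)+1) = ((2*k+1:ℕ):ℤ) by omega]
      rw [show ((jn:ℕ):ℤ) + (((N+1:ℕ):ℤ)+1) = ((2*k+2:ℕ):ℤ) by omega]
      rw [show ((jn:ℕ):ℤ) + (((N+2:ℕ):ℤ)+1) = ((2*k+3:ℕ):ℤ) by omega]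
      rw [hc1, hc2, hc3]
      have hbody : ∀ i ∈ Finset.range N,
          ((i:ℤ)+1) * c ((jn:ℤ) + ((i:ℤ)+1))
            = ((i:ℤ)+1) * ((-1:ℤ)^jn * (-1:ℤ)^(i+1)) := by
        intro i hi
        rw [Finset.mem_range] at hi
        rw [show ((jn:ℕ):ℤ) + ((i:ℤ)+1) = ((jn+i+1 : ℕ):ℤ) by push_cast; ring]
        rw [hc0 (jn+i+1) (by omega) (by omega), ← pow_add]
        rw [add_assoc]
      rw [Finset.sum_congr rfl hbody]
      rw [show (∑ i ∈ Finset.range N, ((i:ℤ)+1) * ((-1:ℤ)^jn * (-1:ℤ)^(i+1)))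
          = (-1:ℤ)^jn * ∑ i ∈ Finset.range N, ((i:ℤ)+1) * (-1:ℤ)^(i+1) by
        rw [Finset.mul_sum]; exact Finset.sum_congr rfl fun i _ => by ring]
      have h2S := altsum_pretzel N
      rcases Nat.even_or_odd jn with he | ho
      · have hpow : (-1:ℤ)^jn = 1 := Even.neg_one_pow he
        have hEN : Even N := by
          obtain ⟨m, hm⟩ := he
          exact ⟨k - m, by omega⟩
        rw [if_pos hEN] at h2S
        rw [hpow]
        obtain ⟨m, hm⟩ := he
        omega
      · have hpow : (-1:ℤ)^jn = -1 := Odd.neg_one_pow ho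
        have hON : ¬ Even N := by
          obtain ⟨m, hm⟩ := ho
          rintro ⟨r, hr⟩
          omega
        rw [if_neg hON] at h2S
        rw [hpow]
        obtain ⟨m, hm⟩ := ho
        omega
  · -- case j = 2k+2
    intro heq
    have hjn : jn = 2*k+2 := by omega
    subst hjn
    rw [key (2*k+2), show 2*k+3-(2*k+2) = 1 from by omega, Finset.sum_range_one]
    rw [show ((2*k+2:ℕ):ℤ) + (((0:ℕ):ℤ)+1) = ((2*k+3:ℕ):ℤ) by push_cast; ring]
    rw [hc3]
    norm_num
  · -- case j ≥ 2k+3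
    intro hge
    rw [key jn, show 2*k+3-jn = 0 from by omega]
    simp
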